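/- Let G act on a finite set X, with B = (α₁,…,αₙ) a partial base and S a partial strong generating set for G. With Gⁱ = G_{α₁,…,α_i}, Sⁱ = S ∩ Gⁱ, Hⁱ = ⟨Sⁱ⟩, G⁰ = H⁰ = G: the condition Gⁱ = Hⁱ for all i = 0,…,n holds if and only if (Hⁱ)_{α_{i+1}} = H^{i+1} for all i = 0,…,n−1. -/
import Mathlib


/-- Leon's theorem, (2) ↔ (3): `Gⁱ = Hⁱ` for all `i` iff
`(Hⁱ)_{α_{i+1}} = H^{i+1}` for all `i`. -/
theorem leon_two_iff_three {G X : Type*} [Group G] [Finite G] [Finite X]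
    [MulAction G X] (n : ℕ) (α : ℕ → X) (S : Set G)
    (hS : Subgroup.closure S = ⊤)
    (hB : ∀ s ∈ S, ∃ i < n, s • α i ≠ α i) :
    let Gi : ℕ → Subgroup G := fun i => ⨅ j ∈ Finset.range i, MulAction.stabilizer G (α j)
    let Hi : ℕ → Subgroup G := fun i => Subgroup.closure (S ∩ (Gi i : Set G))
    (∀ i ≤ n, Gi i = Hi i) ↔
      (∀ i < n, Hi i ⊓ MulAction.stabilizer G (α i) = Hi (i + 1)) := by
  intro Gi Hi
  have hstep : ∀ i, Gi (i + 1) = Gi i ⊓ MulAction.stabilizer G (α i) := by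
    intro i
    simp only [Gi, Finset.range_add_one, Finset.iInf_insert, inf_comm]
  constructor
  · intro h i hi
    rw [← h i hi.le, ← h (i + 1) hi, hstep]
  · intro h i hi
    induction i with
    | zero =>
      have : Gi 0 = ⊤ := by simp [Gi]
      rw [this]
      have : S ∩ ((Gi 0 : Subgroup G) : Set G) = S := by rw [this]; simp
      simp only [Hi, this, hS]
    | succ k ih =>
      have hk : k < n := hi
      rw [hstep, ih hk.le, h k hk]
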